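/- arXiv:math/0201033 — 5 statements merged into one kernel-verified Lean document; each statement's English description precedes it below -/
import Mathlib

section
/- Let p : F → E be a connected covering of directed graphs and v ∈ F⁰. For w ∈ p⁻¹(p(v)), choose a reduced walk a in F from w to v; then p(a) is a reduced loop at p(v), the coset p(a)·p∗π₁(F, v) in π₁(E, p(v))/p∗π₁(F, v) does not depend on the choice of a, and the resulting map θ : w ↦ p(a)·p∗π₁(F, v) is a bijection from p⁻¹(p(v)) onto the set of left cosets π₁(E, p(v))/p∗π₁(F, v). -/
/-- A directed graph `E = (E⁰, E¹, r, s)`. -/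
structure Digraph' : Type 1 where
  V : Type
  E : Type
  r : E → V
  s : E → V

namespace Digraph'

/-- A step in a walk: an edge traversed forwards (`true`) or backwards (`false`). -/
abbrev Step (X : Digraph') : Type := X.E × Bool

def stepSrc (X : Digraph') (p : X.Step) : X.V := if p.2 then X.s p.1 else X.r p.1

def stepTgt (X : Digraph') (p : X.Step) : X.V := if p.2 then X.r p.1 else X.s p.1

/-- `X.IsWalk u v l`: `l` is a walk from `u` to `v`. -/
def IsWalk (X : Digraph') : X.V → X.V → List X.Step → Prop
  | u, v, [] => u = v
  | u, v, p :: l => X.stepSrc p = u ∧ X.IsWalk (X.stepTgt p) v l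

/-- A walk is reduced if it contains no subwalk `e e⁻¹` or `e⁻¹ e`. -/
def Reduced (X : Digraph') (l : List X.Step) : Prop :=
  List.Chain' (fun p q => ¬(p.1 = q.1 ∧ p.2 = !q.2)) l

/-- The reverse of a walk, traversing it backwards and inverting each edge. -/
def winv (X : Digraph') (l : List X.Step) : List X.Step :=
  (l.map fun p => (p.1, !p.2)).reverse

open Classical in
/-- The reduction of a walk: repeatedly delete adjacent pairs `e e⁻¹`, `e⁻¹ e`. -/
noncomputable def red (X : Digraph') : List X.Step → List X.Step
  | [] => []
  | p :: l =>
    match X.red l with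
    | [] => [p]
    | q :: m => if p.1 = q.1 ∧ p.2 = !q.2 then m else p :: q :: m

/-- The reduced loops in `X` based at `u`; the carrier of `π₁(X, u)`. -/
abbrev Loop (X : Digraph') (u : X.V) : Type :=
  {l : List X.Step // X.IsWalk u u l ∧ X.Reduced l}

/-- `X` is connected: there is a walk between any two vertices. -/
def Connected (X : Digraph') : Prop := ∀ u v : X.V, ∃ l, X.IsWalk u v l

end Digraph'

namespace Digraph'

variable {X : Digraph'}

-- ==== auxiliary lemmas ====

variable {X : Digraph'}


open Classical in
private lemma red_cons (X : Digraph') (p : X.Step) (l : List X.Step) :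
    X.red (p :: l) = (match X.red l with
      | [] => [p]
      | q :: m => if p.1 = q.1 ∧ p.2 = !q.2 then m else p :: q :: m) := rfl

private lemma ite_irrel {c : Prop} (i1 i2 : Decidable c) {α : Sort*} (a b : α) :
    @ite _ c i1 a b = @ite _ c i2 a b := by
  cases i1 <;> cases i2 <;> simp_all

lemma red_eq (X : Digraph') (l : List X.Step) :
    X.red l = @FreeGroup.reduce X.E (Classical.decEq _) l := by
  induction l with
  | nil => rfl
  | cons p l ih =>
    letI := Classical.decEq X.E
    rw [red_cons, ih, FreeGroup.reduce.cons]
    cases @FreeGroup.reduce X.E (Classical.decEq _) l with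
    | nil => rfl
    | cons q m => exact ite_irrel _ _ _ _

lemma winv_eq (X : Digraph') (l : List X.Step) : X.winv l = FreeGroup.invRev l := rfl

lemma isWalk_append {u v w : X.V} {l m : List X.Step} (h1 : X.IsWalk u v l)
    (h2 : X.IsWalk v w m) : X.IsWalk u w (l ++ m) := by
  induction l generalizing u with
  | nil => cases h1; exact h2
  | cons q l ih => exact ⟨h1.1, ih h1.2⟩

lemma isWalk_append_iff {u w : X.V} {l m : List X.Step} :
    X.IsWalk u w (l ++ m) ↔ ∃ v, X.IsWalk u v l ∧ X.IsWalk v w m := by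
  induction l generalizing u with
  | nil =>
    simp only [List.nil_append]
    exact ⟨fun h => ⟨u, rfl, h⟩, fun ⟨v, h1, h2⟩ => by cases h1; exact h2⟩
  | cons q l ih =>
    constructor
    · rintro ⟨h1, h2⟩
      obtain ⟨t, ht1, ht2⟩ := ih.1 h2
      exact ⟨t, ⟨h1, ht1⟩, ht2⟩
    · rintro ⟨t, ⟨h1, h2⟩, h3⟩
      exact ⟨h1, ih.2 ⟨t, h2, h3⟩⟩

lemma isWalk_end_unique {u v v' : X.V} {l : List X.Step} (h : X.IsWalk u v l)
    (h' : X.IsWalk u v' l) : v = v' := by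
  induction l generalizing u with
  | nil => exact h.symm.trans h'
  | cons q l ih => exact ih h.2 h'.2

lemma stepSrc_inv (q : X.Step) : X.stepSrc (q.1, !q.2) = X.stepTgt q := by
  rcases q with ⟨e, b⟩; cases b <;> simp [stepSrc, stepTgt]

lemma stepTgt_inv (q : X.Step) : X.stepTgt (q.1, !q.2) = X.stepSrc q := by
  rcases q with ⟨e, b⟩; cases b <;> simp [stepSrc, stepTgt]

lemma isWalk_winv {u v : X.V} {l : List X.Step} (h : X.IsWalk u v l) :
    X.IsWalk v u (X.winv l) := by
  induction l generalizing u with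
  | nil => cases h; rfl
  | cons q l ih =>
    have : X.winv (q :: l) = X.winv l ++ [(q.1, !q.2)] := by simp [winv]
    rw [this]
    refine isWalk_append (ih h.2) ⟨(stepSrc_inv q), ?_⟩
    show X.stepTgt (q.1, !q.2) = u
    rw [stepTgt_inv]
    exact h.1

lemma winv_winv (l : List X.Step) : X.winv (X.winv l) = l := by
  simp [winv_eq, FreeGroup.invRev_invRev]

lemma reduced_red (X : Digraph') (l : List X.Step) : X.Reduced (X.red l) := by
  induction l with
  | nil => exact List.IsChain.nil
  | cons p l ih =>
    rw [red_cons]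
    cases h : X.red l with
    | nil => exact List.isChain_singleton p
    | cons q m =>
      rw [h] at ih
      by_cases hc : p.1 = q.1 ∧ p.2 = !q.2
      · simp only [if_pos hc]
        exact ih.tail
      · simp only [if_neg hc]
        exact List.isChain_cons_cons.2 ⟨hc, ih⟩

lemma red_of_reduced {l : List X.Step} (h : X.Reduced l) : X.red l = l := by
  induction l with
  | nil => rfl
  | cons p l ih =>
    rw [red_cons, ih h.tail]
    cases hl : l with
    | nil => rfl
    | cons q m =>
      have : ¬(p.1 = q.1 ∧ p.2 = !q.2) := (List.isChain_cons_cons.1 (hl ▸ h)).1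
      simp only [if_neg this]

lemma reduced_iff (l : List X.Step) : X.Reduced l ↔ X.red l = l :=
  ⟨red_of_reduced, fun h => h ▸ reduced_red X l⟩

lemma reduced_winv {l : List X.Step} (h : X.Reduced l) : X.Reduced (X.winv l) := by
  letI := Classical.decEq X.E
  rw [reduced_iff] at h ⊢
  rw [winv_eq, red_eq, FreeGroup.reduce_invRev, ← red_eq, h]

lemma isWalk_step {u v : X.V} {L M : List X.Step}
    (hs : @FreeGroup.Red.Step X.E L M) (hw : X.IsWalk u v L) : X.IsWalk u v M := by
  rcases hs with @⟨L1, L2, x, b⟩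
  obtain ⟨t, h1, h2⟩ := isWalk_append_iff.1 hw
  obtain ⟨hsrc, hsrc2, h3⟩ := h2
  refine isWalk_append h1 ?_
  have ht : X.stepTgt ((x, b).1, !(x, b).2) = X.stepSrc (x, b) := stepTgt_inv (x, b)
  rw [show X.stepTgt (x, !b) = X.stepSrc (x, b) from ht] at h3
  rwa [hsrc] at h3

lemma isWalk_of_red {u v : X.V} {l m : List X.Step}
    (hred : @FreeGroup.Red X.E l m) (h : X.IsWalk u v l) : X.IsWalk u v m := by
  induction hred with
  | refl => exact h
  | tail _ hstep ih => exact isWalk_step hstep ih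

lemma isWalk_red {u v : X.V} {l : List X.Step} (h : X.IsWalk u v l) :
    X.IsWalk u v (X.red l) := by
  letI := Classical.decEq X.E
  have hred : @FreeGroup.Red X.E l (X.red l) := by
    rw [red_eq]; exact FreeGroup.reduce.red
  exact isWalk_of_red hred h

-- ==== group value lemmas ====

lemma one_val {u : X.V} [Group (X.Loop u)]
    (hG : ∀ a b : X.Loop u, (a * b).val = X.red (a.val ++ b.val)) :
    (1 : X.Loop u).val = [] := by
  letI := Classical.decEq X.E
  set c := (1 : X.Loop u).val with hc
  have hr : FreeGroup.reduce c = c := by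
    rw [← red_eq]; exact red_of_reduced (1 : X.Loop u).prop.2
  have h1 : X.red (c ++ c) = c := by rw [← hG 1 1, mul_one]
  have e1 : FreeGroup.reduce (c ++ c) = FreeGroup.reduce c := by rw [hr, ← red_eq, h1]
  have e2 : FreeGroup.mk c * FreeGroup.mk c = FreeGroup.mk c := by
    rw [FreeGroup.mul_mk]; exact FreeGroup.reduce.exact e1
  have e3 : FreeGroup.mk c = FreeGroup.mk [] := by
    rw [← FreeGroup.one_eq_mk]; exact mul_eq_left.mp e2
  have := FreeGroup.reduce.sound e3
  rw [hr] at this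
  simpa using this

lemma inv_val {u : X.V} [Group (X.Loop u)]
    (hG : ∀ a b : X.Loop u, (a * b).val = X.red (a.val ++ b.val)) (a : X.Loop u) :
    (a⁻¹).val = X.winv a.val := by
  letI := Classical.decEq X.E
  have hw : X.IsWalk u u (X.winv a.val) := isWalk_winv a.prop.1
  have hrd : X.Reduced (X.winv a.val) := reduced_winv a.prop.2
  have hmul : a * ⟨X.winv a.val, hw, hrd⟩ = 1 := by
    apply Subtype.ext
    rw [hG, one_val hG, red_eq]
    show FreeGroup.reduce (a.val ++ X.winv a.val) = []
    rw [winv_eq]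
    have e : FreeGroup.mk (a.val ++ FreeGroup.invRev a.val) = FreeGroup.mk [] := by
      rw [← FreeGroup.mul_mk, ← FreeGroup.inv_mk, ← FreeGroup.one_eq_mk, mul_inv_cancel]
    simpa using FreeGroup.reduce.sound e
  rw [inv_eq_of_mul_eq_one_right hmul]

end Digraph'



/-- A morphism of directed graphs. -/
structure Digraph'.Hom (F E : Digraph') where
  vmap : F.V → E.V
  emap : F.E → E.E
  hr : ∀ e, E.r (emap e) = vmap (F.r e)
  hs : ∀ e, E.s (emap e) = vmap (F.s e)

/-- The action of a graph morphism on walks. -/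
def Digraph'.Hom.wmap {F E : Digraph'} (p : Digraph'.Hom F E) (l : List F.Step) :
    List E.Step :=
  l.map fun q => (p.emap q.1, q.2)

/-- A covering of directed graphs: a surjective morphism restricting to bijections
on incoming and outgoing edge sets at each vertex. -/
structure Digraph'.IsCovering {F E : Digraph'} (p : Digraph'.Hom F E) : Prop where
  vsurj : Function.Surjective p.vmap
  esurj : Function.Surjective p.emap
  rbij : ∀ v : F.V, Set.BijOn p.emap {e | F.r e = v} {e | E.r e = p.vmap v}
  sbij : ∀ v : F.V, Set.BijOn p.emap {e | F.s e = v} {e | E.s e = p.vmap v}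


namespace Digraph'

variable {F E : Digraph'} (p : Digraph'.Hom F E)

lemma stepSrc_wmap (q : F.Step) : E.stepSrc (p.emap q.1, q.2) = p.vmap (F.stepSrc q) := by
  rcases q with ⟨e, b⟩; cases b <;> simp [stepSrc, p.hr, p.hs]

lemma stepTgt_wmap (q : F.Step) : E.stepTgt (p.emap q.1, q.2) = p.vmap (F.stepTgt q) := by
  rcases q with ⟨e, b⟩; cases b <;> simp [stepTgt, p.hr, p.hs]

lemma wmap_isWalk {u v : F.V} {l : List F.Step} (h : F.IsWalk u v l) :
    E.IsWalk (p.vmap u) (p.vmap v) (p.wmap l) := by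
  induction l generalizing u with
  | nil => cases h; rfl
  | cons q l ih =>
    refine ⟨?_, ?_⟩
    · show E.stepSrc (p.emap q.1, q.2) = p.vmap u
      rw [stepSrc_wmap, h.1]
    · show E.IsWalk (E.stepTgt (p.emap q.1, q.2)) (p.vmap v) (p.wmap l)
      rw [stepTgt_wmap]
      exact ih h.2

lemma wmap_append (l m : List F.Step) : p.wmap (l ++ m) = p.wmap l ++ p.wmap m :=
  List.map_append

lemma wmap_winv (l : List F.Step) : p.wmap (F.winv l) = E.winv (p.wmap l) := by
  simp [Hom.wmap, winv, List.map_reverse, Function.comp_def]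

lemma emap_inj_of_r (hp : IsCovering p) {e e' : F.E} (h : F.r e = F.r e')
    (he : p.emap e = p.emap e') : e = e' :=
  (hp.rbij (F.r e')).injOn h rfl he

lemma emap_inj_of_s (hp : IsCovering p) {e e' : F.E} (h : F.s e = F.s e')
    (he : p.emap e = p.emap e') : e = e' :=
  (hp.sbij (F.s e')).injOn h rfl he

lemma wmap_reduced (hp : IsCovering p) {l : List F.Step} {u v : F.V}
    (hw : F.IsWalk u v l) (hr : F.Reduced l) : E.Reduced (p.wmap l) := by
  induction l generalizing u with
  | nil => exact List.IsChain.nil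
  | cons q l ih =>
    cases l with
    | nil => exact List.isChain_singleton _
    | cons q' m =>
      have hsrc : F.stepSrc q' = F.stepTgt q := hw.2.1
      have hq : ¬(q.1 = q'.1 ∧ q.2 = !q'.2) := (List.isChain_cons_cons.1 hr).1
      have key : ¬((p.emap q.1, q.2).1 = (p.emap q'.1, q'.2).1 ∧
          (p.emap q.1, q.2).2 = !(p.emap q'.1, q'.2).2) := by
        rintro ⟨he, hb⟩
        simp only at he hb
        refine hq ⟨?_, hb⟩
        show q.1 = q'.1
        rcases q with ⟨e, b⟩; rcases q' with ⟨e', b'⟩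
        simp only at he hb hsrc ⊢
        subst hb
        cases b' with
        | false =>
          have h2 : F.r e' = F.r e := by simpa [stepSrc, stepTgt] using hsrc
          exact emap_inj_of_r p hp h2.symm he
        | true =>
          have h2 : F.s e' = F.s e := by simpa [stepSrc, stepTgt] using hsrc
          exact emap_inj_of_s p hp h2.symm he
      exact List.isChain_cons_cons.2 ⟨key, ih hw.2 hr.tail⟩

lemma reduced_of_wmap {l : List F.Step} (h : E.Reduced (p.wmap l)) : F.Reduced l := by
  have h' := (List.isChain_map _).1 h
  exact h'.imp fun a b hR ⟨h1, h2⟩ => hR ⟨by rw [h1], h2⟩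

lemma wmap_red (hp : IsCovering p) {u v : F.V} {l : List F.Step} (hw : F.IsWalk u v l) :
    p.wmap (F.red l) = E.red (p.wmap l) := by
  letI := Classical.decEq E.E
  letI := Classical.decEq F.E
  have hmapstep : ∀ {L M : List F.Step}, FreeGroup.Red.Step L M →
      FreeGroup.Red.Step (p.wmap L) (p.wmap M) := by
    rintro L M @⟨L1, L2, x, b⟩
    simp only [Hom.wmap, List.map_append, List.map_cons]
    exact FreeGroup.Red.Step.not
  have hrel : ∀ {L M : List F.Step}, @FreeGroup.Red F.E L M →
      @FreeGroup.Red E.E (p.wmap L) (p.wmap M) := by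
    intro L M h0
    induction h0 with
    | refl => exact Relation.ReflTransGen.refl
    | tail _ hstep ih => exact Relation.ReflTransGen.tail ih (hmapstep hstep)
  have hred : @FreeGroup.Red E.E (p.wmap l) (p.wmap (F.red l)) :=
    hrel (by rw [red_eq]; exact FreeGroup.reduce.red)
  have h2 : E.red (p.wmap l) = E.red (p.wmap (F.red l)) := by
    rw [red_eq, red_eq]; exact FreeGroup.reduce.eq_of_red hred
  rw [h2, red_of_reduced (wmap_reduced p hp (isWalk_red hw) (reduced_red F l))]

lemma lift_exists (hp : IsCovering p) :
    ∀ (L : List E.Step) (u : F.V) (t : E.V), E.IsWalk (p.vmap u) t L →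
      ∃ (M : List F.Step) (w : F.V), F.IsWalk u w M ∧ p.wmap M = L ∧ p.vmap w = t := by
  intro L
  induction L with
  | nil => exact fun u t h => ⟨[], u, rfl, rfl, h⟩
  | cons q L ih =>
    rintro u t ⟨hsrc, hwalk⟩
    rcases q with ⟨e, b⟩
    cases b with
    | false =>
      have he : E.r e = p.vmap u := by simpa [stepSrc] using hsrc
      obtain ⟨f', hf', hfe⟩ := (hp.rbij u).surjOn (show e ∈ {e | E.r e = p.vmap u} from he)
      have htgt : E.stepTgt (e, false) = p.vmap (F.s f') := by
        simp [stepTgt, ← hfe, p.hs]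
      rw [htgt] at hwalk
      obtain ⟨M, w, hM, hMmap, hwend⟩ := ih (F.s f') t hwalk
      refine ⟨(f', false) :: M, w, ⟨?_, ?_⟩, ?_, hwend⟩
      · simpa [stepSrc] using hf'
      · show F.IsWalk (F.stepTgt (f', false)) w M
        simpa [stepTgt] using hM
      · show (p.emap f', false) :: p.wmap M = (e, false) :: L
        rw [hfe, hMmap]
    | true =>
      have he : E.s e = p.vmap u := by simpa [stepSrc] using hsrc
      obtain ⟨f', hf', hfe⟩ := (hp.sbij u).surjOn (show e ∈ {e | E.s e = p.vmap u} from he)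
      have htgt : E.stepTgt (e, true) = p.vmap (F.r f') := by
        simp [stepTgt, ← hfe, p.hr]
      rw [htgt] at hwalk
      obtain ⟨M, w, hM, hMmap, hwend⟩ := ih (F.r f') t hwalk
      refine ⟨(f', true) :: M, w, ⟨?_, ?_⟩, ?_, hwend⟩
      · simpa [stepSrc] using hf'
      · show F.IsWalk (F.stepTgt (f', true)) w M
        simpa [stepTgt] using hM
      · show (p.emap f', true) :: p.wmap M = (e, true) :: L
        rw [hfe, hMmap]

lemma lift_unique (hp : IsCovering p) :
    ∀ (M M' : List F.Step) (u w w' : F.V), F.IsWalk u w M → F.IsWalk u w' M' →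
      p.wmap M = p.wmap M' → M = M' := by
  intro M
  induction M with
  | nil =>
    intro M' u w w' _ _ hmap
    cases M' with
    | nil => rfl
    | cons q' M'' => simp [Hom.wmap] at hmap
  | cons q M ih =>
    intro M' u w w' hM hM' hmap
    cases M' with
    | nil => simp [Hom.wmap] at hmap
    | cons q' M'' =>
      simp only [Hom.wmap, List.map_cons, List.cons.injEq, Prod.mk.injEq] at hmap
      obtain ⟨⟨he, hb⟩, htl⟩ := hmap
      have hq : q = q' := by
        rcases q with ⟨e, b⟩; rcases q' with ⟨e', b'⟩
        simp only at he hb; subst hb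
        have hsrc : F.stepSrc (e, b) = F.stepSrc (e', b) := hM.1.trans hM'.1.symm
        cases b with
        | true => exact Prod.ext (emap_inj_of_s p hp (by simpa [stepSrc] using hsrc) he) rfl
        | false => exact Prod.ext (emap_inj_of_r p hp (by simpa [stepSrc] using hsrc) he) rfl
      subst hq
      exact congrArg (q :: ·) (ih M'' (F.stepTgt q) w w' hM.2 hM'.2 htl)

end Digraph'

open Digraph'

/-- for a connected covering `p : F → E`, choosing for each `w` in the fibre
`p⁻¹(p(v))` a reduced walk `a` from `w` to `v`, the image `p(a)` is a reduced loop at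
`p(v)`, its coset mod `p₊π₁(F, v)` is independent of the choice, and `w ↦ p(a)·p₊π₁(F,v)`
is a bijection of the fibre onto the left coset space `π₁(E, p(v))/p₊π₁(F, v)`. -/
theorem fibre_bijects_with_cosets {F E : Digraph'} (p : Digraph'.Hom F E)
    (hp : Digraph'.IsCovering p) (hconn : F.Connected) (v : F.V)
    [GF : Group (F.Loop v)]
    (hGF : ∀ a b : F.Loop v, (a * b).val = F.red (a.val ++ b.val))
    [GE : Group (E.Loop (p.vmap v))]
    (hGE : ∀ a b : E.Loop (p.vmap v), (a * b).val = E.red (a.val ++ b.val))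
    (f : F.Loop v →* E.Loop (p.vmap v))
    (hf : ∀ l : F.Loop v, (f l).val = p.wmap l.val) :
    (∀ (w : F.V) (a : List F.Step), p.vmap w = p.vmap v → F.IsWalk w v a → F.Reduced a →
      E.IsWalk (p.vmap v) (p.vmap v) (p.wmap a) ∧ E.Reduced (p.wmap a)) ∧
    ∃ θ : {w : F.V // p.vmap w = p.vmap v} ≃ (E.Loop (p.vmap v) ⧸ f.range),
      ∀ (w : F.V) (hw : p.vmap w = p.vmap v) (a : List F.Step),
        F.IsWalk w v a → F.Reduced a →
        ∀ hb : E.IsWalk (p.vmap v) (p.vmap v) (p.wmap a) ∧ E.Reduced (p.wmap a),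
          θ ⟨w, hw⟩ = QuotientGroup.mk (⟨p.wmap a, hb⟩ : E.Loop (p.vmap v)) := by
  classical
  have hloopwalk : ∀ (w : F.V) (hw : p.vmap w = p.vmap v) (a : List F.Step),
      F.IsWalk w v a → F.Reduced a →
      E.IsWalk (p.vmap v) (p.vmap v) (p.wmap a) ∧ E.Reduced (p.wmap a) := by
    intro w hw a hwalk hred
    refine ⟨?_, wmap_reduced p hp hwalk hred⟩
    have h := wmap_isWalk p hwalk
    rwa [hw] at h
  refine ⟨fun w a hw hwalk hred => hloopwalk w hw a hwalk hred, ?_⟩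
  have hdom : ∀ w : {w : F.V // p.vmap w = p.vmap v},
      ∃ a, F.IsWalk w.1 v a ∧ F.Reduced a := by
    intro w
    obtain ⟨l, hl⟩ := hconn w.1 v
    exact ⟨F.red l, isWalk_red hl, reduced_red F l⟩
  choose A hA1 hA2 using hdom
  have hlp : ∀ w : {w : F.V // p.vmap w = p.vmap v},
      E.IsWalk (p.vmap v) (p.vmap v) (p.wmap (A w)) ∧ E.Reduced (p.wmap (A w)) :=
    fun w => hloopwalk w.1 w.2 (A w) (hA1 w) (hA2 w)
  let loopOf : {w : F.V // p.vmap w = p.vmap v} → E.Loop (p.vmap v) :=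
    fun w => ⟨p.wmap (A w), hlp w⟩
  let θf : {w : F.V // p.vmap w = p.vmap v} → (E.Loop (p.vmap v) ⧸ f.range) :=
    fun w => QuotientGroup.mk (loopOf w)
  have key : ∀ (w : {w : F.V // p.vmap w = p.vmap v}) (a : List F.Step),
      F.IsWalk w.1 v a → F.Reduced a →
      ∀ hb : E.IsWalk (p.vmap v) (p.vmap v) (p.wmap a) ∧ E.Reduced (p.wmap a),
      θf w = QuotientGroup.mk (⟨p.wmap a, hb⟩ : E.Loop (p.vmap v)) := by
    intro w a hwalk hred hb
    show QuotientGroup.mk (loopOf w) = _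
    rw [QuotientGroup.eq]
    have hwalkl : F.IsWalk v v (F.winv (A w) ++ a) :=
      isWalk_append (isWalk_winv (hA1 w)) hwalk
    refine MonoidHom.mem_range.2
      ⟨⟨F.red (F.winv (A w) ++ a), isWalk_red hwalkl, reduced_red F _⟩, ?_⟩
    apply Subtype.ext
    rw [hf]
    show p.wmap (F.red (F.winv (A w) ++ a)) = ((loopOf w)⁻¹ * ⟨p.wmap a, hb⟩).val
    rw [wmap_red p hp hwalkl, hGE, inv_val hGE, wmap_append, wmap_winv]
  have hinj : Function.Injective θf := by
    intro w w' h
    have h2 := (QuotientGroup.eq).1 h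
    obtain ⟨ℓ, hℓ⟩ := MonoidHom.mem_range.1 h2
    have hwalkc : F.IsWalk w.1 v (A w ++ ℓ.val) := isWalk_append (hA1 w) ℓ.prop.1
    have hc : p.wmap (F.red (A w ++ ℓ.val)) = p.wmap (A w') := by
      rw [wmap_red p hp hwalkc, wmap_append]
      calc E.red (p.wmap (A w) ++ p.wmap ℓ.val)
          = E.red ((loopOf w).val ++ (f ℓ).val) := by rw [hf]
        _ = (loopOf w * f ℓ).val := (hGE _ _).symm
        _ = (loopOf w').val := by rw [hℓ, mul_inv_cancel_left]
        _ = p.wmap (A w') := rfl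
    have hswalk : F.IsWalk v w.1 (F.winv (F.red (A w ++ ℓ.val))) :=
      isWalk_winv (isWalk_red hwalkc)
    have hswalk' : F.IsWalk v w'.1 (F.winv (A w')) := isWalk_winv (hA1 w')
    have hequ := lift_unique p hp (F.winv (F.red (A w ++ ℓ.val))) (F.winv (A w')) v w.1 w'.1
      hswalk hswalk' (by rw [wmap_winv, wmap_winv, hc])
    rw [hequ] at hswalk
    exact Subtype.ext (isWalk_end_unique hswalk hswalk')
  have hsurj : Function.Surjective θf := by
    intro q
    refine QuotientGroup.induction_on q fun x => ?_
    have hxw : E.IsWalk (p.vmap v) (p.vmap v) (E.winv x.val) := isWalk_winv x.prop.1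
    obtain ⟨M, w, hM, hMmap, hwend⟩ := lift_exists p hp (E.winv x.val) v (p.vmap v) hxw
    have hamap : p.wmap (F.winv M) = x.val := by rw [wmap_winv, hMmap, winv_winv]
    have hared : F.Reduced (F.winv M) :=
      reduced_of_wmap p (by rw [hamap]; exact x.prop.2)
    have hawalk : F.IsWalk w v (F.winv M) := isWalk_winv hM
    refine ⟨⟨w, hwend⟩, ?_⟩
    have hb := hloopwalk w hwend (F.winv M) hawalk hared
    rw [key ⟨w, hwend⟩ (F.winv M) hawalk hared hb]
    exact congrArg QuotientGroup.mk (Subtype.ext hamap)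
  refine ⟨Equiv.ofBijective θf ⟨hinj, hsurj⟩, ?_⟩
  intro w hw a hwalk hred hb
  exact key ⟨w, hw⟩ a hwalk hred hb
end

section
/- Let c : E¹ → G be a labelling of the edges of a directed graph E by a group G, and let H be a subgroup of G. Then the coordinate projection maps (x, gH) ↦ x from the relative skew product E ×_c (G/H) to E form a covering of directed graphs. -/
namespace Digraph'

/-- The relative skew product `E ×_c (G/H)` of a graph `E` by a labelling `c : E¹ → G`
relative to a subgroup `H ≤ G`: vertices `E⁰ × (G/H)`, edges `E¹ × (G/H)`,
`r(e, gH) = (r(e), gH)`, `s(e, gH) = (s(e), c(e)gH)`. -/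
def skew (X : Digraph') {G : Type} [Group G] (c : X.E → G) (H : Subgroup G) : Digraph' where
  V := X.V × (G ⧸ H)
  E := X.E × (G ⧸ H)
  r := fun p => (X.r p.1, p.2)
  s := fun p => (X.s p.1, c p.1 • p.2)

/-- The coordinate projection `(x, gH) ↦ x` from `E ×_c (G/H)` to `E`. -/
def skewProj (X : Digraph') {G : Type} [Group G] (c : X.E → G) (H : Subgroup G) :
    Digraph'.Hom (X.skew c H) X where
  vmap := Prod.fst
  emap := Prod.fst
  hr := fun _ => rfl
  hs := fun _ => rfl

end Digraph'

open Digraph'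

/-- the coordinate projections `(x, gH) ↦ x` from the relative skew product
`E ×_c (G/H)` to `E` form a covering of directed graphs. -/
theorem skewProj_isCovering (X : Digraph') {G : Type} [Group G] (c : X.E → G)
    (H : Subgroup G) :
    Digraph'.IsCovering (X.skewProj c H) := by
  constructor
  · intro v; exact ⟨(v, (1 : G)), rfl⟩
  · intro e; exact ⟨(e, (1 : G)), rfl⟩
  · rintro ⟨u, g⟩
    refine ⟨?_, ?_, ?_⟩
    · rintro ⟨e, k⟩ he
      obtain ⟨h1, h2⟩ := Prod.mk.inj he
      exact h1
    · rintro ⟨e1, k1⟩ h1 ⟨e2, k2⟩ h2 he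
      obtain ⟨_, hk1⟩ := Prod.mk.inj h1
      obtain ⟨_, hk2⟩ := Prod.mk.inj h2
      exact Prod.ext he (hk1.trans hk2.symm)
    · rintro e he
      exact ⟨(e, g), Prod.ext he rfl, rfl⟩
  · rintro ⟨u, g⟩
    refine ⟨?_, ?_, ?_⟩
    · rintro ⟨e, k⟩ he
      obtain ⟨h1, h2⟩ := Prod.mk.inj he
      exact h1
    · rintro ⟨e1, k1⟩ h1 ⟨e2, k2⟩ h2 he
      obtain ⟨_, hk1⟩ := Prod.mk.inj h1
      obtain ⟨_, hk2⟩ := Prod.mk.inj h2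
      cases he
      exact Prod.ext rfl (smul_left_cancel _ (hk1.trans hk2.symm))
    · rintro e he
      exact ⟨(e, (c e)⁻¹ • g), Prod.ext he (smul_inv_smul _ _), rfl⟩
end

section
/- Let c, c' : E¹ → G be two labellings of a connected directed graph E by a group G which are cohomologous, i.e., there is a function b : E⁰ → G with b(s(e)) c'(e) = c(e) b(r(e)) for all edges e. Then for any subgroup H ≤ G, the relative skew products E ×_{c'} (G/H) and E ×_c (G/H) are isomorphic as directed graphs. -/
open Digraph'

/-- cohomologous labellings `c, c'` (i.e. `b(s(e)) c'(e) = c(e) b(r(e))`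
for some `b : E⁰ → G`) give isomorphic relative skew products `E ×_{c'} (G/H)` and
`E ×_c (G/H)`. -/
theorem cohomologous_labellings_iso_skew (X : Digraph') (hconn : X.Connected)
    {G : Type} [Group G] (c c' : X.E → G) (b : X.V → G)
    (hb : ∀ e : X.E, b (X.s e) * c' e = c e * b (X.r e)) (H : Subgroup G) :
    ∃ φ : Digraph'.Hom (X.skew c' H) (X.skew c H),
      Function.Bijective φ.vmap ∧ Function.Bijective φ.emap := by
  refine ⟨⟨fun p => (p.1, b p.1 • p.2), fun p => (p.1, b (X.r p.1) • p.2),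
    fun e => rfl, fun e => ?_⟩, ?_, ?_⟩
  · show (X.s e.1, c e.1 • b (X.r e.1) • e.2) = (X.s e.1, b (X.s e.1) • c' e.1 • e.2)
    rw [smul_smul, smul_smul, ← hb]
  · constructor
    · rintro ⟨u, x⟩ ⟨v, y⟩ h
      obtain ⟨rfl, h2⟩ := Prod.mk.injEq .. ▸ h
      exact Prod.ext rfl (smul_left_cancel _ h2)
    · rintro ⟨v, y⟩; exact ⟨(v, (b v)⁻¹ • y), by simp; rfl⟩
  · constructor
    · rintro ⟨u, x⟩ ⟨v, y⟩ h
      obtain ⟨rfl, h2⟩ := Prod.mk.injEq .. ▸ h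
      exact Prod.ext rfl (smul_left_cancel _ h2)
    · rintro ⟨e, y⟩; exact ⟨(e, (b (X.r e))⁻¹ • y), by simp; rfl⟩
end

section
/- Let c : E¹ → G be a labelling of the edges of a directed graph E by a group G, and let H act on the skew product graph E ×_c G on the right by (x, g)·h = (x, gh) for a subgroup H ≤ G. Then this action of H on E ×_c G is free on vertices and edges, and the quotient graph (E ×_c G)/H is isomorphic to the relative skew product E ×_c (G/H). -/
namespace Digraph'

/-- The (full) skew product `E ×_c G`: vertices `E⁰ × G`, edges `E¹ × G`,
`r(e, g) = (r(e), g)`, `s(e, g) = (s(e), c(e)g)`. -/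
def skewG (X : Digraph') {G : Type} [Group G] (c : X.E → G) : Digraph' where
  V := X.V × G
  E := X.E × G
  r := fun p => (X.r p.1, p.2)
  s := fun p => (X.s p.1, c p.1 * p.2)

/-- The orbit equivalence relation on `α × G` for the right action
`(x, g)·h = (x, gh)` of a subgroup `H ≤ G`. -/
def orbSetoid {G : Type} [Group G] (H : Subgroup G) (α : Type) : Setoid (α × G) where
  r p q := p.1 = q.1 ∧ ∃ h ∈ H, q.2 = p.2 * h
  iseqv := by
    constructor
    · exact fun p => ⟨rfl, 1, H.one_mem, (mul_one _).symm⟩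
    · rintro ⟨x, g⟩ ⟨y, g'⟩ ⟨h1, h, hH, rfl⟩
      exact ⟨h1.symm, h⁻¹, H.inv_mem hH, by group⟩
    · rintro ⟨x, g⟩ ⟨y, g'⟩ ⟨z, g''⟩ ⟨h1, h, hH, rfl⟩ ⟨h2, k, hK, rfl⟩
      exact ⟨h1.trans h2, h * k, H.mul_mem hH hK, by dsimp; group⟩

/-- The quotient graph `(E ×_c G)/H` of the skew product by the right action of `H`. -/
def quotSkewG (X : Digraph') {G : Type} [Group G] (c : X.E → G) (H : Subgroup G) :
    Digraph' where
  V := Quotient (orbSetoid H X.V)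
  E := Quotient (orbSetoid H X.E)
  r := Quotient.map (fun p => ((X.skewG c).r p)) (by
    rintro ⟨e, g⟩ ⟨e', g'⟩ ⟨h1, h, hH, rfl⟩
    dsimp at h1
    subst h1
    exact ⟨rfl, h, hH, rfl⟩)
  s := Quotient.map (fun p => ((X.skewG c).s p)) (by
    rintro ⟨e, g⟩ ⟨e', g'⟩ ⟨h1, h, hH, rfl⟩
    dsimp at h1
    subst h1
    exact ⟨rfl, h, hH, (mul_assoc _ _ _).symm⟩)

end Digraph'

open Digraph'

private lemma orbMap_resp {G : Type} [Group G] (H : Subgroup G) (α : Type) :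
    ∀ p q : α × G, (orbSetoid H α).r p q →
      (p.1, (QuotientGroup.mk p.2 : G ⧸ H)) = (q.1, QuotientGroup.mk q.2) := by
  rintro ⟨x, g⟩ ⟨y, g'⟩ ⟨h1, h, hH, rfl⟩
  dsimp at h1; subst h1
  refine Prod.ext rfl ?_
  exact (QuotientGroup.eq.mpr (by simpa using H.inv_mem (H.inv_mem hH))).symm

/-- the right action `(x, g)·h = (x, gh)` of `H ≤ G` on the skew product
`E ×_c G` is free on vertices and edges, and the quotient graph `(E ×_c G)/H` is
isomorphic to the relative skew product `E ×_c (G/H)`. -/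
theorem quotient_of_skew_product_iso_relative_skew (X : Digraph') {G : Type} [Group G]
    (c : X.E → G) (H : Subgroup G) :
    (∀ (p : (X.skewG c).V) (h : G), h ∈ H → (p.1, p.2 * h) = p → h = 1) ∧
    (∀ (p : (X.skewG c).E) (h : G), h ∈ H → (p.1, p.2 * h) = p → h = 1) ∧
    ∃ φ : Digraph'.Hom (X.quotSkewG c H) (X.skew c H),
      Function.Bijective φ.vmap ∧ Function.Bijective φ.emap := by
  refine ⟨?_, ?_, ?_⟩
  · rintro ⟨x, g⟩ h _ hp
    have : g * h = g := congrArg Prod.snd hp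
    rwa [mul_eq_left] at this
  · rintro ⟨x, g⟩ h _ hp
    have : g * h = g := congrArg Prod.snd hp
    rwa [mul_eq_left] at this
  · have key : ∀ (α : Type), Function.Bijective
        (Quotient.lift (fun p : α × G => (p.1, QuotientGroup.mk (s := H) p.2))
          (orbMap_resp H α) :
          Quotient (orbSetoid H α) → α × (G ⧸ H)) := by
      intro α
      constructor
      · rintro ⟨⟨x, g⟩⟩ ⟨⟨y, g'⟩⟩ hq
        have h1 : x = y := congrArg Prod.fst hq
        subst h1
        have h2 : QuotientGroup.mk (s := H) g = QuotientGroup.mk g' :=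
          congrArg Prod.snd hq
        obtain ⟨h, hH, hg⟩ : ∃ h ∈ H, g' = g * h := by
          have := QuotientGroup.eq.mp h2
          exact ⟨g⁻¹ * g', this, by group⟩
        exact Quotient.sound ⟨rfl, h, hH, hg⟩
      · rintro ⟨x, ⟨g⟩⟩
        exact ⟨⟦(x, g)⟧, rfl⟩
    refine ⟨⟨Quotient.lift (fun p => (p.1, QuotientGroup.mk p.2)) (orbMap_resp H X.V),
        Quotient.lift (fun p => (p.1, QuotientGroup.mk p.2)) (orbMap_resp H X.E), ?_, ?_⟩,
        key X.V, key X.E⟩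
    · rintro ⟨⟨e, g⟩⟩; rfl
    · rintro ⟨⟨e, g⟩⟩
      refine Prod.ext rfl ?_
      show c e • (QuotientGroup.mk g : G ⧸ H) = QuotientGroup.mk (c e * g)
      rfl
end

section
/- Let δ be a coaction of a discrete group G on a C*-algebra A and H ≤ G a subgroup. Then the restriction δ̂|_H of the dual action to H on A ×_δ G is proper in Rieffel's sense with respect to the dense invariant *-subalgebra (A ×_δ G)₀ = span{j_A(a_r)j_G(χ_t)}: for a = j_A(a_r)j_G(χ_t) and b = j_A(b_s)j_G(χ_u), the multiplier ⟨a,b⟩_D defined as j_A(a_r* b_s) j_G(χ_{uH}) if rt = su and 0 otherwise satisfies Σ_{h∈H} c · δ̂_h(a*b) = c · ⟨a,b⟩_D for every c ∈ (A ×_δ G)₀ (the sum having only finitely many nonzero terms), and c⟨a,b⟩_D, ⟨a,b⟩_D c ∈ (A ×_δ G)₀. -/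
open scoped Pointwise

/-
We axiomatize the crossed product `A ×_δ G` of a C*-algebra `A` by a coaction `δ` of a
discrete group `G` inside the multiplier algebra `M = M(A ×_δ G)`: `As s` is the
spectral subspace `A_s`; `jA`, `jG t = j_G(χ_t)`, `jGH S = j_G(χ_S)` (so
`jGH (u • H) = j_G(χ_{uH})`); covariance reads
`j_A(a_r) j_G(χ_t) = j_G(χ_{rt}) j_A(a_r)`, and `dhat` is the dual action, with
`δ̂_h(j_A(a_r)j_G(χ_t)) = j_A(a_r)j_G(χ_{th⁻¹})`.  `(A ×_δ G)₀` is the dense invariant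
*-subalgebra `span{j_A(a_r)j_G(χ_t)}`.
-/

open Classical in
/-- Rieffel properness of the restricted dual action `δ̂|_H` with respect
to `(A ×_δ G)₀`: for the spanning elements `a = j_A(a_r)j_G(χ_t)`,
`b = j_A(b_s)j_G(χ_u)`, the multiplier
`⟨a,b⟩_D = j_A(a_r* b_s) j_G(χ_{uH})` if `rt = su` (and `0` otherwise) satisfies
`Σ_{h∈H} c·δ̂_h(a*b) = c·⟨a,b⟩_D` for every `c ∈ (A ×_δ G)₀` (the sum having finite
support), and `c⟨a,b⟩_D, ⟨a,b⟩_D c ∈ (A ×_δ G)₀`; moreover `(A ×_δ G)₀` is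
`δ̂|_H`-invariant and closed under `star`. -/
theorem dual_action_is_proper {G : Type} [Group G] {A M : Type}
    [NonUnitalNormedRing A] [StarRing A] [NormedSpace ℂ A]
    [NormedRing M] [StarRing M] [CStarRing M] [NormedAlgebra ℂ M] [StarModule ℂ M]
    [CompleteSpace M]
    (As : G → Set A) (jA : A → M) (jG : G → M) (jGH : Set G → M)
    (hAs_dense : Dense (↑(Submodule.span ℂ (⋃ s, As s)) : Set A))
    (hAs_smul : ∀ (s : G) (z : ℂ) a, a ∈ As s → z • a ∈ As s)
    (hAs_add : ∀ (s : G) a b, a ∈ As s → b ∈ As s → a + b ∈ As s)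
    (hAs_mul : ∀ (s t : G) a b, a ∈ As s → b ∈ As t → a * b ∈ As (s * t))
    (hAs_star : ∀ (s : G) a, a ∈ As s → star a ∈ As s⁻¹)
    (hjA_add : ∀ a b, jA (a + b) = jA a + jA b)
    (hjA_smul : ∀ (z : ℂ) a, jA (z • a) = z • jA a)
    (hjA_mul : ∀ a b, jA (a * b) = jA a * jA b)
    (hjA_star : ∀ a, jA (star a) = star (jA a))
    (hjG_star : ∀ t, star (jG t) = jG t)
    (hjG_orth : ∀ t u, jG t * jG u = if t = u then jG t else 0)
    (hcov : ∀ (s t : G) (a : A), a ∈ As s → jA a * jG t = jG (s * t) * jA a)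
    (hjGH_mulr : ∀ (S : Set G) (t : G), jGH S * jG t = if t ∈ S then jG t else 0)
    (hjGH_mull : ∀ (S : Set G) (t : G), jG t * jGH S = if t ∈ S then jG t else 0)
    (hsep : ∀ m m' : M, (∀ t, m * jG t = m' * jG t) → m = m')
    (dhat : G → M → M)
    (hdhat_one : ∀ x, dhat 1 x = x)
    (hdhat_comp : ∀ g h x, dhat g (dhat h x) = dhat (g * h) x)
    (hdhat_add : ∀ g x y, dhat g (x + y) = dhat g x + dhat g y)
    (hdhat_mul : ∀ g x y, dhat g (x * y) = dhat g x * dhat g y)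
    (hdhat_star : ∀ g x, dhat g (star x) = star (dhat g x))
    (hdhat_jA : ∀ g a, dhat g (jA a) = jA a)
    (hdhat_jG : ∀ g t, dhat g (jG t) = jG (t * g⁻¹))
    (H : Subgroup G) :
    ∀ (r t s u : G) (ar bs : A), ar ∈ As r → bs ∈ As s →
      (∀ c ∈ Submodule.span ℂ
          {m : M | ∃ (l v : G) (cl : A), cl ∈ As l ∧ m = jA cl * jG v},
        ((Function.support fun h : H =>
            c * dhat h (star (jA ar * jG t) * (jA bs * jG u))).Finite ∧
          ∑ᶠ h : H, c * dhat h (star (jA ar * jG t) * (jA bs * jG u)) =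
            c * (if r * t = s * u then
                  star (jA ar) * jA bs * jGH (u • (H : Set G)) else 0)) ∧
        (c * (if r * t = s * u then
                star (jA ar) * jA bs * jGH (u • (H : Set G)) else 0) ∈
            Submodule.span ℂ
              {m : M | ∃ (l v : G) (cl : A), cl ∈ As l ∧ m = jA cl * jG v}) ∧
        ((if r * t = s * u then
            star (jA ar) * jA bs * jGH (u • (H : Set G)) else 0) * c ∈
            Submodule.span ℂ
              {m : M | ∃ (l v : G) (cl : A), cl ∈ As l ∧ m = jA cl * jG v})) ∧
    (∀ c ∈ Submodule.span ℂ
        {m : M | ∃ (l v : G) (cl : A), cl ∈ As l ∧ m = jA cl * jG v},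
      (∀ h : H, dhat h c ∈ Submodule.span ℂ
          {m : M | ∃ (l v : G) (cl : A), cl ∈ As l ∧ m = jA cl * jG v}) ∧
      star c ∈ Submodule.span ℂ
          {m : M | ∃ (l v : G) (cl : A), cl ∈ As l ∧ m = jA cl * jG v}) := by
  classical
  set S : Set M := {m : M | ∃ (l v : G) (cl : A), cl ∈ As l ∧ m = jA cl * jG v} with hSdef
  have swap : ∀ (l v : G) (cl : A), cl ∈ As l → jG v * jA cl = jA cl * jG (l⁻¹ * v) := by
    intro l v cl hcl
    rw [hcov l (l⁻¹ * v) cl hcl, mul_inv_cancel_left]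
  have hsmulc : ∀ (z : ℂ) (x : M), x ∈ AddSubmonoid.closure S →
      z • x ∈ AddSubmonoid.closure S := by
    intro z x hx
    induction hx using AddSubmonoid.closure_induction with
    | mem m hm =>
      obtain ⟨l, v, cl, hcl, rfl⟩ := hm
      refine AddSubmonoid.subset_closure ⟨l, v, z • cl, hAs_smul l z cl hcl, ?_⟩
      rw [hjA_smul, smul_mul_assoc]
    | zero => rw [smul_zero]; exact zero_mem _
    | add a b _ _ ha hb => rw [smul_add]; exact add_mem ha hb
  have hsub : ∀ c ∈ Submodule.span ℂ S, c ∈ AddSubmonoid.closure S := by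
    intro c hc
    induction hc using Submodule.span_induction with
    | mem m hm => exact AddSubmonoid.subset_closure hm
    | zero => exact zero_mem _
    | add x y _ _ hx hy => exact add_mem hx hy
    | smul z x hx ih => exact hsmulc z x ih
  have hmemS : ∀ (l v : G) (cl : A), cl ∈ As l → jA cl * jG v ∈ Submodule.span ℂ S :=
    fun l v cl hcl => Submodule.subset_span ⟨l, v, cl, hcl, rfl⟩
  refine fun r t s u ar bs har hbs => ⟨?_, ?_⟩
  · -- main properness statement
    set d : A := star ar * bs with hd_def
    have hd : d ∈ As (r⁻¹ * s) := hAs_mul _ _ _ _ (hAs_star r ar har) hbs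
    have hjAd : star (jA ar) * jA bs = jA d := by rw [hd_def, hjA_mul, hjA_star]
    have hx : ∀ h : G, dhat h (star (jA ar * jG t) * (jA bs * jG u)) =
        jG (t * h⁻¹) * (jA d * jG (u * h⁻¹)) := by
      intro h
      have e1 : star (jA ar * jG t) * (jA bs * jG u) = jG t * (jA d * jG u) := by
        rw [hd_def, star_mul, hjG_star, ← hjA_star, hjA_mul]
        simp only [mul_assoc]
      rw [e1, hdhat_mul, hdhat_mul, hdhat_jG, hdhat_jA, hdhat_jG]
    by_cases heq : r * t = s * u
    · -- the coherent case
      have ht : t = r⁻¹ * (s * u) := by rw [← heq]; group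
      have hxh : ∀ h : G, dhat h (star (jA ar * jG t) * (jA bs * jG u)) =
          jA d * jG (u * h⁻¹) := by
        intro h
        have harg : (r⁻¹ * s)⁻¹ * (t * h⁻¹) = u * h⁻¹ := by rw [ht]; group
        rw [hx h, ← mul_assoc, swap (r⁻¹ * s) (t * h⁻¹) d hd, mul_assoc, harg,
          hjG_orth, if_pos rfl]
      rw [if_pos heq, hjAd]
      intro c hc
      replace hc := hsub c hc
      induction hc using AddSubmonoid.closure_induction with
      | mem m hm =>
        obtain ⟨l, v, cl, hcl, rfl⟩ := hm
        set h₀ : G := v⁻¹ * t with hh0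
        have key : ∀ h : G, (jA cl * jG v) * dhat h (star (jA ar * jG t) * (jA bs * jG u)) =
            if h = h₀ then jA cl * (jA d * jG ((r⁻¹ * s)⁻¹ * v)) else 0 := by
          intro h
          rw [hxh h, mul_assoc, ← mul_assoc (jG v), swap (r⁻¹ * s) v d hd, mul_assoc,
            hjG_orth]
          have hcond : ((r⁻¹ * s)⁻¹ * v = u * h⁻¹) ↔ h = h₀ := by
            rw [eq_mul_inv_iff_mul_eq, ← eq_inv_mul_iff_mul_eq]
            have he : ((r⁻¹ * s)⁻¹ * v)⁻¹ * u = h₀ := by rw [hh0, ht]; group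
            rw [he]
          by_cases hh : h = h₀
          · rw [if_pos (hcond.mpr hh), if_pos hh]
          · rw [if_neg (fun hc' => hh (hcond.mp hc')), if_neg hh, mul_zero, mul_zero]
        have hw : u⁻¹ * ((r⁻¹ * s)⁻¹ * v) = h₀⁻¹ := by rw [hh0, ht]; group
        have hcD : jA cl * jG v * (jA d * jGH (u • (H : Set G))) =
            if h₀ ∈ H then jA cl * (jA d * jG ((r⁻¹ * s)⁻¹ * v)) else 0 := by
          rw [mul_assoc, ← mul_assoc (jG v), swap (r⁻¹ * s) v d hd, mul_assoc,
            hjGH_mull]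
          have hmem : ((r⁻¹ * s)⁻¹ * v ∈ u • (H : Set G)) ↔ h₀ ∈ H := by
            rw [Set.mem_smul_set_iff_inv_smul_mem, smul_eq_mul, hw, SetLike.mem_coe,
              inv_mem_iff]
          by_cases hh : h₀ ∈ H
          · rw [if_pos (hmem.mpr hh), if_pos hh]
          · rw [if_neg (fun hc' => hh (hmem.mp hc')), if_neg hh, mul_zero, mul_zero]
        refine ⟨⟨?_, ?_⟩, ?_, ?_⟩
        · -- finite support
          by_cases hh : h₀ ∈ H
          · apply Set.Finite.subset (Set.finite_singleton (⟨h₀, hh⟩ : H))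
            intro h hsup
            simp only [Function.mem_support] at hsup
            rw [Set.mem_singleton_iff]
            by_contra hne
            exact hsup (by rw [key, if_neg (fun hc' => hne (Subtype.ext hc'))])
          · apply Set.Finite.subset (Set.finite_empty)
            intro h hsup
            simp only [Function.mem_support] at hsup
            exact hsup (by rw [key, if_neg (fun (hc' : (h : G) = h₀) => hh (hc' ▸ h.2))])
        · -- the sum
          rw [hcD]
          by_cases hh : h₀ ∈ H
          · rw [if_pos hh]
            rw [finsum_eq_single _ (⟨h₀, hh⟩ : H)
              (fun h hne => by rw [key, if_neg (fun hc' => hne (Subtype.ext hc'))])]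
            show jA cl * jG v * dhat (((⟨h₀, hh⟩ : H) : G))
                (star (jA ar * jG t) * (jA bs * jG u)) =
              jA cl * (jA d * jG ((r⁻¹ * s)⁻¹ * v))
            rw [key, if_pos rfl]
          · rw [if_neg hh]
            rw [finsum_eq_zero_of_forall_eq_zero
              (fun h => by rw [key, if_neg (fun (hc' : (h : G) = h₀) => hh (hc' ▸ h.2))])]
        · -- c * D ∈ span
          rw [hcD]
          by_cases hh : h₀ ∈ H
          · rw [if_pos hh, ← mul_assoc, ← hjA_mul]
            exact hmemS _ _ _ (hAs_mul _ _ _ _ hcl hd)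
          · rw [if_neg hh]; exact Submodule.zero_mem _
        · -- D * c ∈ span
          have hDc : jA d * jGH (u • (H : Set G)) * (jA cl * jG v) =
              if l * v ∈ u • (H : Set G) then jA (d * cl) * jG v else 0 := by
            rw [hcov l v cl hcl, ← mul_assoc, mul_assoc (jA d), hjGH_mulr]
            by_cases hh : l * v ∈ u • (H : Set G)
            · rw [if_pos hh, if_pos hh, mul_assoc, swap l (l * v) cl hcl,
                inv_mul_cancel_left, ← mul_assoc, ← hjA_mul]
            · rw [if_neg hh, if_neg hh, mul_zero, zero_mul]
          rw [hDc]
          by_cases hh : l * v ∈ u • (H : Set G)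
          · rw [if_pos hh]; exact hmemS _ _ _ (hAs_mul _ _ _ _ hd hcl)
          · rw [if_neg hh]; exact Submodule.zero_mem _
      | zero =>
        refine ⟨⟨?_, ?_⟩, ?_, ?_⟩
        · apply Set.Finite.subset (Set.finite_empty)
          intro h hsup
          simp only [Function.mem_support] at hsup
          exact hsup (zero_mul _)
        · rw [zero_mul, finsum_eq_zero_of_forall_eq_zero (fun h => zero_mul _)]
        · rw [zero_mul]; exact Submodule.zero_mem _
        · rw [mul_zero]; exact Submodule.zero_mem _
      | add x y hx' hy' ihx ihy =>
        obtain ⟨⟨ihx1, ihx2⟩, ihx3, ihx4⟩ := ihx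
        obtain ⟨⟨ihy1, ihy2⟩, ihy3, ihy4⟩ := ihy
        refine ⟨⟨?_, ?_⟩, ?_, ?_⟩
        · apply Set.Finite.subset (ihx1.union ihy1)
          intro h hsup
          simp only [Function.mem_support] at hsup
          by_contra hne
          simp only [Set.mem_union, Function.mem_support, not_or, not_not] at hne
          exact hsup (by rw [add_mul, hne.1, hne.2, add_zero])
        · have hfg : (fun h : H => (x + y) * dhat (h : G) (star (jA ar * jG t) * (jA bs * jG u))) =
              (fun h : H => x * dhat (h : G) (star (jA ar * jG t) * (jA bs * jG u)) +
                y * dhat (h : G) (star (jA ar * jG t) * (jA bs * jG u))) := by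
            funext h; rw [add_mul]
          rw [hfg, finsum_add_distrib ihx1 ihy1, ihx2, ihy2, ← add_mul]
        · rw [add_mul]; exact Submodule.add_mem _ ihx3 ihy3
        · rw [mul_add]; exact Submodule.add_mem _ ihx4 ihy4
    · -- r * t ≠ s * u : everything is zero
      have hx0 : ∀ h : G, dhat h (star (jA ar * jG t) * (jA bs * jG u)) = 0 := by
        intro h
        have hne' : t * h⁻¹ ≠ r⁻¹ * s * (u * h⁻¹) := by
          intro hc'
          apply heq
          have h2 : t = r⁻¹ * s * u :=
            mul_right_cancel (b := h⁻¹) (by rw [hc']; group)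
          rw [h2]; group
        rw [hx h, hcov (r⁻¹ * s) (u * h⁻¹) d hd, ← mul_assoc, hjG_orth, if_neg hne',
          zero_mul]
      rw [if_neg heq]
      intro c hc
      refine ⟨⟨?_, ?_⟩, ?_, ?_⟩
      · apply Set.Finite.subset (Set.finite_empty)
        intro h hsup
        simp only [Function.mem_support] at hsup
        exact hsup (by rw [hx0, mul_zero])
      · rw [mul_zero]
        rw [finsum_eq_zero_of_forall_eq_zero
          (fun h => by rw [hx0, mul_zero] :
            ∀ h : H, c * dhat (h : G) (star (jA ar * jG t) * (jA bs * jG u)) = 0)]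
      · rw [mul_zero]; exact Submodule.zero_mem _
      · rw [zero_mul]; exact Submodule.zero_mem _
  · -- invariance and star-closedness
    intro c hc
    replace hc := hsub c hc
    induction hc using AddSubmonoid.closure_induction with
    | mem m hm =>
      obtain ⟨l, v, cl, hcl, rfl⟩ := hm
      constructor
      · intro h
        rw [hdhat_mul, hdhat_jA, hdhat_jG]
        exact hmemS _ _ _ hcl
      · rw [star_mul, hjG_star, ← hjA_star, swap l⁻¹ v (star cl) (hAs_star l cl hcl)]
        exact hmemS _ _ _ (hAs_star l cl hcl)
    | zero =>
      constructor
      · intro h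
        have h0 : dhat (h : G) (0 : M) = 0 := by
          have h1 := hdhat_add (h : G) 0 0
          rw [add_zero] at h1
          exact right_eq_add.mp h1
        rw [h0]; exact Submodule.zero_mem _
      · rw [star_zero]; exact Submodule.zero_mem _
    | add x y hx' hy' ihx ihy =>
      constructor
      · intro h
        rw [hdhat_add]
        exact Submodule.add_mem _ (ihx.1 h) (ihy.1 h)
      · rw [star_add]
        exact Submodule.add_mem _ ihx.2 ihy.2
end
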